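/- Let p₁, p₂, p₃, c₁, c₂, c₃ : ℝ → ℂ be continuous on [0,1] with ∫_0^1 cₖ(t) dt = 0 for k = 1,2,3. For each k define hₖ : ℝ → ℂ on [0,3] by hₖ(t) = pₖ(t) for t ∈ [0,1], hₖ(t) = cₖ(t−1) for t ∈ (1,2], hₖ(t) = −pₖ(3−t) for t ∈ (2,3]. Then ∫_{0 ≤ t₁ ≤ t₂ ≤ t₃ ≤ 3} h₁(t₁)h₂(t₂)h₃(t₃) dt₁dt₂dt₃ = ∫_{0 ≤ t₁ ≤ t₂ ≤ t₃ ≤ 1} c₁(t₁)c₂(t₂)c₃(t₃) + (∫_0^1 p₁)·(∫_{0 ≤ s ≤ t ≤ 1} c₂(s)c₃(t)) − (∫_{0 ≤ s ≤ t ≤ 1} c₁(s)c₂(t))·(∫_0^1 p₃). -/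

import Mathlib

open MeasureTheory Set intervalIntegral

private lemma myCongrIoc {f g : ℝ → ℂ} {a b : ℝ} (hab : a ≤ b)
    (h : ∀ t ∈ Set.Ioc a b, f t = g t) :
    ∫ t in a..b, f t = ∫ t in a..b, g t := by
  rw [intervalIntegral.integral_of_le hab, intervalIntegral.integral_of_le hab]
  exact MeasureTheory.setIntegral_congr_fun measurableSet_Ioc h

private lemma myIntCongrIoc {f g : ℝ → ℂ} {a b : ℝ} (hab : a ≤ b)
    (h : ∀ t ∈ Set.Ioc a b, f t = g t) (hg : IntervalIntegrable g volume a b) :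
    IntervalIntegrable f volume a b := by
  rw [intervalIntegrable_iff_integrableOn_Ioc_of_le hab] at hg ⊢
  exact hg.congr_fun (fun t ht => (h t ht).symm) measurableSet_Ioc

private lemma myIISub {q : ℝ → ℂ} {A B : ℝ} (hq : ContinuousOn q (Set.Icc A B))
    {a b : ℝ} (ha : a ∈ Set.Icc A B) (hb : b ∈ Set.Icc A B) :
    IntervalIntegrable q volume a b :=
  (hq.mono (Set.uIcc_subset_Icc ha hb)).intervalIntegrable

private lemma myPrim {q : ℝ → ℂ} (hq : ContinuousOn q (Set.Icc 0 1)) :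
    ContinuousOn (fun x => ∫ t in (0:ℝ)..x, q t) (Set.Icc 0 1) := by
  have h := intervalIntegral.continuousOn_primitive_interval (a := (0:ℝ)) (b := 1)
    (f := q) (μ := volume) (by rw [Set.uIcc_of_le zero_le_one]; exact hq.integrableOn_Icc)
  rwa [Set.uIcc_of_le zero_le_one] at h

private lemma myShift {q : ℝ → ℂ} (hq : ContinuousOn q (Set.Icc 0 1)) :
    ContinuousOn (fun s => q (s - 1)) (Set.Icc 1 2) := by
  refine hq.comp ((continuous_id.sub continuous_const).continuousOn) fun x hx => ?_
  exact ⟨by linarith [hx.1], by linarith [hx.2]⟩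

private lemma myReflect {q : ℝ → ℂ} (hq : ContinuousOn q (Set.Icc 0 1)) :
    ContinuousOn (fun s => q (3 - s)) (Set.Icc 2 3) := by
  refine hq.comp ((continuous_const.sub continuous_id).continuousOn) fun x hx => ?_
  exact ⟨by linarith [hx.2], by linarith [hx.1]⟩

private lemma conj_key (p0 p1 p2 c0 c1 c2 h0 h1 h2 : ℝ → ℂ)
    (cp0 : ContinuousOn p0 (Set.Icc 0 1)) (cp1 : ContinuousOn p1 (Set.Icc 0 1))
    (cp2 : ContinuousOn p2 (Set.Icc 0 1))
    (cc0 : ContinuousOn c0 (Set.Icc 0 1)) (cc1 : ContinuousOn c1 (Set.Icc 0 1))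
    (cc2 : ContinuousOn c2 (Set.Icc 0 1))
    (z0 : (∫ t in (0:ℝ)..1, c0 t) = 0) (z1 : (∫ t in (0:ℝ)..1, c1 t) = 0)
    (z2 : (∫ t in (0:ℝ)..1, c2 t) = 0)
    (e1 : ∀ t ∈ Set.Icc (0:ℝ) 1, h0 t = p0 t)
    (e2 : ∀ t ∈ Set.Ioc (1:ℝ) 2, h0 t = c0 (t - 1))
    (e3 : ∀ t ∈ Set.Ioc (2:ℝ) 3, h0 t = -p0 (3 - t))
    (f1 : ∀ t ∈ Set.Icc (0:ℝ) 1, h1 t = p1 t)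
    (f2 : ∀ t ∈ Set.Ioc (1:ℝ) 2, h1 t = c1 (t - 1))
    (f3 : ∀ t ∈ Set.Ioc (2:ℝ) 3, h1 t = -p1 (3 - t))
    (g1 : ∀ t ∈ Set.Icc (0:ℝ) 1, h2 t = p2 t)
    (g2 : ∀ t ∈ Set.Ioc (1:ℝ) 2, h2 t = c2 (t - 1))
    (g3 : ∀ t ∈ Set.Ioc (2:ℝ) 3, h2 t = -p2 (3 - t)) :
    (∫ t₃ in (0:ℝ)..3, ∫ t₂ in (0:ℝ)..t₃, ∫ t₁ in (0:ℝ)..t₂, h0 t₁ * h1 t₂ * h2 t₃)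
      = (∫ t₃ in (0:ℝ)..1, ∫ t₂ in (0:ℝ)..t₃, ∫ t₁ in (0:ℝ)..t₂, c0 t₁ * c1 t₂ * c2 t₃)
        + (∫ t in (0:ℝ)..1, p0 t) * (∫ t in (0:ℝ)..1, ∫ s in (0:ℝ)..t, c1 s * c2 t)
        - (∫ t in (0:ℝ)..1, ∫ s in (0:ℝ)..t, c0 s * c1 t) * (∫ t in (0:ℝ)..1, p2 t) := by
  have i01 : (0:ℝ) ∈ Set.Icc (0:ℝ) 1 := ⟨le_refl 0, zero_le_one⟩
  have i11 : (1:ℝ) ∈ Set.Icc (0:ℝ) 1 := ⟨zero_le_one, le_refl 1⟩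
  -- ## Level 1: the primitive of h0 on the three pieces
  have ih01 : IntervalIntegrable h0 volume 0 1 :=
    myIntCongrIoc zero_le_one (fun t ht => e1 t (Set.Ioc_subset_Icc_self ht))
      (myIISub cp0 i01 i11)
  have ih1t : ∀ t ∈ Set.Icc (1:ℝ) 2, IntervalIntegrable h0 volume 1 t := by
    intro t ht
    refine myIntCongrIoc ht.1 (fun s hs => e2 s ⟨hs.1, hs.2.trans ht.2⟩) ?_
    exact myIISub (myShift cc0) ⟨le_refl 1, one_le_two⟩ ht
  have ih2t : ∀ t ∈ Set.Icc (2:ℝ) 3, IntervalIntegrable h0 volume 2 t := by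
    intro t ht
    refine myIntCongrIoc ht.1 (fun s hs => e3 s ⟨hs.1, hs.2.trans ht.2⟩) ?_
    exact myIISub ((myReflect cp0).neg) ⟨le_refl 2, by norm_num⟩ ht
  have F0a : ∀ t ∈ Set.Icc (0:ℝ) 1, (∫ s in (0:ℝ)..t, h0 s) = ∫ s in (0:ℝ)..t, p0 s := by
    intro t ht
    refine intervalIntegral.integral_congr fun s hs => ?_
    rw [Set.uIcc_of_le ht.1] at hs
    exact e1 s ⟨hs.1, hs.2.trans ht.2⟩
  have F0b : ∀ t ∈ Set.Icc (1:ℝ) 2,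
      (∫ s in (0:ℝ)..t, h0 s) = (∫ s in (0:ℝ)..1, p0 s) + ∫ s in (0:ℝ)..(t-1), c0 s := by
    intro t ht
    rw [← intervalIntegral.integral_add_adjacent_intervals ih01 (ih1t t ht)]
    congr 1
    · exact F0a 1 i11
    · rw [myCongrIoc ht.1 (fun s hs => e2 s ⟨hs.1, hs.2.trans ht.2⟩)]
      have := intervalIntegral.integral_comp_sub_right (a := (1:ℝ)) (b := t) c0 1
      rw [this]; norm_num
  have F0c : ∀ t ∈ Set.Icc (2:ℝ) 3,
      (∫ s in (0:ℝ)..t, h0 s) = ∫ s in (0:ℝ)..(3-t), p0 s := by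
    intro t ht
    have h3t : (3 - t) ∈ Set.Icc (0:ℝ) 1 := ⟨by linarith [ht.2], by linarith [ht.1]⟩
    have ih02 : IntervalIntegrable h0 volume 0 2 :=
      ih01.trans (ih1t 2 ⟨one_le_two, le_refl 2⟩)
    rw [← intervalIntegral.integral_add_adjacent_intervals ih02 (ih2t t ht)]
    have v2 : (∫ s in (0:ℝ)..2, h0 s) = ∫ s in (0:ℝ)..1, p0 s := by
      rw [F0b 2 ⟨one_le_two, le_refl 2⟩]
      norm_num [z0]
    have v3 : (∫ s in (2:ℝ)..t, h0 s) = -∫ s in (3-t)..1, p0 s := by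
      rw [myCongrIoc ht.1 (fun s hs => e3 s ⟨hs.1, hs.2.trans ht.2⟩)]
      rw [intervalIntegral.integral_neg]
      congr 1
      have := intervalIntegral.integral_comp_sub_left (a := (2:ℝ)) (b := t) p0 3
      rw [this]; norm_num
    have split : (∫ s in (0:ℝ)..(3-t), p0 s) + (∫ s in (3-t)..1, p0 s)
        = ∫ s in (0:ℝ)..1, p0 s :=
      intervalIntegral.integral_add_adjacent_intervals
        (myIISub cp0 i01 h3t) (myIISub cp0 h3t i11)
    rw [v2, v3, ← split]; ring
  -- ## Level 2: the double-integral primitive on the three pieces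
  have contPP : ContinuousOn (fun s => (∫ u in (0:ℝ)..s, p0 u) * p1 s) (Set.Icc 0 1) :=
    (myPrim cp0).mul cp1
  have contQ : ContinuousOn
      (fun x => ((∫ s in (0:ℝ)..1, p0 s) + ∫ u in (0:ℝ)..x, c0 u) * c1 x) (Set.Icc 0 1) :=
    (continuousOn_const.add (myPrim cc0)).mul cc1
  have contR : ContinuousOn (fun x => (∫ u in (0:ℝ)..x, p0 u) * (-p1 x)) (Set.Icc 0 1) :=
    (myPrim cp0).mul cp1.neg
  have contCC : ContinuousOn (fun s => (∫ u in (0:ℝ)..s, c0 u) * c1 s) (Set.Icc 0 1) :=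
    (myPrim cc0).mul cc1
  have iφ01 : IntervalIntegrable (fun s => (∫ u in (0:ℝ)..s, h0 u) * h1 s) volume 0 1 := by
    refine myIntCongrIoc zero_le_one (fun s hs => ?_) (myIISub contPP i01 i11)
    have hs' : s ∈ Set.Icc (0:ℝ) 1 := Set.Ioc_subset_Icc_self hs
    rw [F0a s hs', f1 s hs']
  have iφ1t : ∀ t ∈ Set.Icc (1:ℝ) 2,
      IntervalIntegrable (fun s => (∫ u in (0:ℝ)..s, h0 u) * h1 s) volume 1 t := by
    intro t ht
    refine myIntCongrIoc ht.1 (fun s hs => ?_)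
      (myIISub (myShift contQ) ⟨le_refl 1, one_le_two⟩ ht)
    have hs' : s ∈ Set.Ioc (1:ℝ) 2 := ⟨hs.1, hs.2.trans ht.2⟩
    rw [F0b s (Set.Ioc_subset_Icc_self hs'), f2 s hs']
  have iφ2t : ∀ t ∈ Set.Icc (2:ℝ) 3,
      IntervalIntegrable (fun s => (∫ u in (0:ℝ)..s, h0 u) * h1 s) volume 2 t := by
    intro t ht
    refine myIntCongrIoc ht.1 (fun s hs => ?_)
      (myIISub (myReflect contR) ⟨le_refl 2, by norm_num⟩ ht)
    have hs' : s ∈ Set.Ioc (2:ℝ) 3 := ⟨hs.1, hs.2.trans ht.2⟩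
    rw [F0c s (Set.Ioc_subset_Icc_self hs'), f3 s hs']
  have Ga : ∀ t ∈ Set.Icc (0:ℝ) 1,
      (∫ s in (0:ℝ)..t, (∫ u in (0:ℝ)..s, h0 u) * h1 s)
        = ∫ s in (0:ℝ)..t, (∫ u in (0:ℝ)..s, p0 u) * p1 s := by
    intro t ht
    refine intervalIntegral.integral_congr fun s hs => ?_
    rw [Set.uIcc_of_le ht.1] at hs
    have hs' : s ∈ Set.Icc (0:ℝ) 1 := ⟨hs.1, hs.2.trans ht.2⟩
    rw [F0a s hs', f1 s hs']
  have Gb : ∀ t ∈ Set.Icc (1:ℝ) 2,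
      (∫ s in (0:ℝ)..t, (∫ u in (0:ℝ)..s, h0 u) * h1 s)
        = (∫ s in (0:ℝ)..1, (∫ u in (0:ℝ)..s, p0 u) * p1 s)
          + (∫ s in (0:ℝ)..1, p0 s) * (∫ u in (0:ℝ)..(t-1), c1 u)
          + ∫ s in (0:ℝ)..(t-1), (∫ u in (0:ℝ)..s, c0 u) * c1 s := by
    intro t ht
    have ht1 : t - 1 ∈ Set.Icc (0:ℝ) 1 := ⟨by linarith [ht.1], by linarith [ht.2]⟩
    rw [← intervalIntegral.integral_add_adjacent_intervals iφ01 (iφ1t t ht), Ga 1 i11,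
      add_assoc]
    congr 1
    have step1 : (∫ s in (1:ℝ)..t, (∫ u in (0:ℝ)..s, h0 u) * h1 s)
        = ∫ s in (1:ℝ)..t,
            ((∫ x in (0:ℝ)..1, p0 x) + ∫ u in (0:ℝ)..(s-1), c0 u) * c1 (s-1) := by
      refine myCongrIoc ht.1 fun s hs => ?_
      have hs' : s ∈ Set.Ioc (1:ℝ) 2 := ⟨hs.1, hs.2.trans ht.2⟩
      rw [F0b s (Set.Ioc_subset_Icc_self hs'), f2 s hs']
    rw [step1]
    have step2 := intervalIntegral.integral_comp_sub_right (a := (1:ℝ)) (b := t)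
      (fun x => ((∫ s in (0:ℝ)..1, p0 s) + ∫ u in (0:ℝ)..x, c0 u) * c1 x) 1
    norm_num at step2
    rw [step2]
    have step3 : (∫ x in (0:ℝ)..(t-1),
          ((∫ s in (0:ℝ)..1, p0 s) + ∫ u in (0:ℝ)..x, c0 u) * c1 x)
        = ∫ x in (0:ℝ)..(t-1),
            ((∫ s in (0:ℝ)..1, p0 s) * c1 x + (∫ u in (0:ℝ)..x, c0 u) * c1 x) :=
      intervalIntegral.integral_congr fun x _ => by ring
    rw [step3, intervalIntegral.integral_add
        ((myIISub cc1 i01 ht1).const_mul _) (myIISub contCC i01 ht1),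
      intervalIntegral.integral_const_mul]
  have Gc : ∀ t ∈ Set.Icc (2:ℝ) 3,
      (∫ s in (0:ℝ)..t, (∫ u in (0:ℝ)..s, h0 u) * h1 s)
        = (∫ s in (0:ℝ)..(3-t), (∫ u in (0:ℝ)..s, p0 u) * p1 s)
          + ∫ s in (0:ℝ)..1, (∫ u in (0:ℝ)..s, c0 u) * c1 s := by
    intro t ht
    have h3t : (3 - t) ∈ Set.Icc (0:ℝ) 1 := ⟨by linarith [ht.2], by linarith [ht.1]⟩
    have iφ02 : IntervalIntegrable (fun s => (∫ u in (0:ℝ)..s, h0 u) * h1 s) volume 0 2 :=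
      iφ01.trans (iφ1t 2 ⟨one_le_two, le_refl 2⟩)
    rw [← intervalIntegral.integral_add_adjacent_intervals iφ02 (iφ2t t ht)]
    have v2 : (∫ s in (0:ℝ)..2, (∫ u in (0:ℝ)..s, h0 u) * h1 s)
        = (∫ s in (0:ℝ)..1, (∫ u in (0:ℝ)..s, p0 u) * p1 s)
          + ∫ s in (0:ℝ)..1, (∫ u in (0:ℝ)..s, c0 u) * c1 s := by
      rw [Gb 2 ⟨one_le_two, le_refl 2⟩]
      norm_num [z1]
    have v3 : (∫ s in (2:ℝ)..t, (∫ u in (0:ℝ)..s, h0 u) * h1 s)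
        = -∫ x in (3-t)..1, (∫ u in (0:ℝ)..x, p0 u) * p1 x := by
      have step1 : (∫ s in (2:ℝ)..t, (∫ u in (0:ℝ)..s, h0 u) * h1 s)
          = ∫ s in (2:ℝ)..t, (∫ u in (0:ℝ)..(3-s), p0 u) * (-p1 (3-s)) := by
        refine myCongrIoc ht.1 fun s hs => ?_
        have hs' : s ∈ Set.Ioc (2:ℝ) 3 := ⟨hs.1, hs.2.trans ht.2⟩
        rw [F0c s (Set.Ioc_subset_Icc_self hs'), f3 s hs']
      have step2 := intervalIntegral.integral_comp_sub_left (a := (2:ℝ)) (b := t)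
        (fun x => (∫ u in (0:ℝ)..x, p0 u) * (-p1 x)) 3
      norm_num at step2
      rw [step1]
      simp only [mul_neg, intervalIntegral.integral_neg]
      rw [step2]
    have split : (∫ x in (0:ℝ)..(3-t), (∫ u in (0:ℝ)..x, p0 u) * p1 x)
          + (∫ x in (3-t)..1, (∫ u in (0:ℝ)..x, p0 u) * p1 x)
        = ∫ x in (0:ℝ)..1, (∫ u in (0:ℝ)..x, p0 u) * p1 x :=
      intervalIntegral.integral_add_adjacent_intervals
        (myIISub contPP i01 h3t) (myIISub contPP h3t i11)
    rw [v2, v3, ← split]; ring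
  -- ## Level 3
  have contA : ContinuousOn
      (fun x => ∫ s in (0:ℝ)..x, (∫ u in (0:ℝ)..s, p0 u) * p1 s) (Set.Icc 0 1) :=
    myPrim contPP
  have contD : ContinuousOn
      (fun x => ∫ s in (0:ℝ)..x, (∫ u in (0:ℝ)..s, c0 u) * c1 s) (Set.Icc 0 1) :=
    myPrim contCC
  have contC1 : ContinuousOn (fun x => ∫ u in (0:ℝ)..x, c1 u) (Set.Icc 0 1) := myPrim cc1
  have contQ2 : ContinuousOn (fun x =>
      ((∫ s in (0:ℝ)..1, (∫ u in (0:ℝ)..s, p0 u) * p1 s)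
        + (∫ s in (0:ℝ)..1, p0 s) * (∫ u in (0:ℝ)..x, c1 u)
        + ∫ s in (0:ℝ)..x, (∫ u in (0:ℝ)..s, c0 u) * c1 s) * c2 x) (Set.Icc 0 1) :=
    ((continuousOn_const.add (continuousOn_const.mul contC1)).add contD).mul cc2
  have contQ3 : ContinuousOn (fun x =>
      ((∫ s in (0:ℝ)..x, (∫ u in (0:ℝ)..s, p0 u) * p1 s)
        + ∫ s in (0:ℝ)..1, (∫ u in (0:ℝ)..s, c0 u) * c1 s) * (-p2 x)) (Set.Icc 0 1) :=
    (contA.add continuousOn_const).mul cp2.neg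
  have iψ01 : IntervalIntegrable
      (fun t => (∫ s in (0:ℝ)..t, (∫ u in (0:ℝ)..s, h0 u) * h1 s) * h2 t) volume 0 1 := by
    refine myIntCongrIoc zero_le_one (fun t ht => ?_) (myIISub (q := fun x => (∫ s in (0:ℝ)..x, (∫ u in (0:ℝ)..s, p0 u) * p1 s) * p2 x) (contA.mul cp2) i01 i11)
    have ht' : t ∈ Set.Icc (0:ℝ) 1 := Set.Ioc_subset_Icc_self ht
    rw [Ga t ht', g1 t ht']
  have iψ12 : IntervalIntegrable
      (fun t => (∫ s in (0:ℝ)..t, (∫ u in (0:ℝ)..s, h0 u) * h1 s) * h2 t) volume 1 2 := by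
    refine myIntCongrIoc one_le_two (fun t ht => ?_)
      (myIISub (myShift contQ2) ⟨le_refl 1, one_le_two⟩ ⟨one_le_two, le_refl 2⟩)
    rw [Gb t (Set.Ioc_subset_Icc_self ht), g2 t ht]
  have iψ23 : IntervalIntegrable
      (fun t => (∫ s in (0:ℝ)..t, (∫ u in (0:ℝ)..s, h0 u) * h1 s) * h2 t) volume 2 3 := by
    refine myIntCongrIoc (by norm_num) (fun t ht => ?_)
      (myIISub (myReflect contQ3) ⟨le_refl 2, by norm_num⟩ ⟨by norm_num, le_refl 3⟩)
    rw [Gc t (Set.Ioc_subset_Icc_self ht), g3 t ht]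
  -- rewrite nested triple integrals
  have L1 : (∫ t₃ in (0:ℝ)..3, ∫ t₂ in (0:ℝ)..t₃, ∫ t₁ in (0:ℝ)..t₂, h0 t₁ * h1 t₂ * h2 t₃)
      = ∫ t₃ in (0:ℝ)..3,
          (∫ t₂ in (0:ℝ)..t₃, (∫ t₁ in (0:ℝ)..t₂, h0 t₁) * h1 t₂) * h2 t₃ := by
    refine intervalIntegral.integral_congr fun t₃ _ => ?_
    rw [← intervalIntegral.integral_mul_const]
    refine intervalIntegral.integral_congr fun t₂ _ => ?_
    simp only [mul_assoc, intervalIntegral.integral_mul_const]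
  have R1 : (∫ t₃ in (0:ℝ)..1, ∫ t₂ in (0:ℝ)..t₃, ∫ t₁ in (0:ℝ)..t₂, c0 t₁ * c1 t₂ * c2 t₃)
      = ∫ t₃ in (0:ℝ)..1,
          (∫ t₂ in (0:ℝ)..t₃, (∫ t₁ in (0:ℝ)..t₂, c0 t₁) * c1 t₂) * c2 t₃ := by
    refine intervalIntegral.integral_congr fun t₃ _ => ?_
    rw [← intervalIntegral.integral_mul_const]
    refine intervalIntegral.integral_congr fun t₂ _ => ?_
    simp only [mul_assoc, intervalIntegral.integral_mul_const]
  have R2 : (∫ t in (0:ℝ)..1, ∫ s in (0:ℝ)..t, c1 s * c2 t)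
      = ∫ t in (0:ℝ)..1, (∫ s in (0:ℝ)..t, c1 s) * c2 t :=
    intervalIntegral.integral_congr fun t _ => by
      rw [intervalIntegral.integral_mul_const]
  have R3 : (∫ t in (0:ℝ)..1, ∫ s in (0:ℝ)..t, c0 s * c1 t)
      = ∫ t in (0:ℝ)..1, (∫ s in (0:ℝ)..t, c0 s) * c1 t :=
    intervalIntegral.integral_congr fun t _ => by
      rw [intervalIntegral.integral_mul_const]
  -- split [0,3] = [0,1] ∪ [1,2] ∪ [2,3]
  have splitL : (∫ t in (0:ℝ)..3,
        (∫ s in (0:ℝ)..t, (∫ u in (0:ℝ)..s, h0 u) * h1 s) * h2 t)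
      = (∫ t in (0:ℝ)..1, (∫ s in (0:ℝ)..t, (∫ u in (0:ℝ)..s, h0 u) * h1 s) * h2 t)
        + (∫ t in (1:ℝ)..2, (∫ s in (0:ℝ)..t, (∫ u in (0:ℝ)..s, h0 u) * h1 s) * h2 t)
        + (∫ t in (2:ℝ)..3, (∫ s in (0:ℝ)..t, (∫ u in (0:ℝ)..s, h0 u) * h1 s) * h2 t) := by
    rw [intervalIntegral.integral_add_adjacent_intervals iψ01 iψ12,
      intervalIntegral.integral_add_adjacent_intervals (iψ01.trans iψ12) iψ23]
  -- piece values
  have J1 : (∫ t in (0:ℝ)..1, (∫ s in (0:ℝ)..t, (∫ u in (0:ℝ)..s, h0 u) * h1 s) * h2 t)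
      = ∫ t in (0:ℝ)..1,
          (∫ s in (0:ℝ)..t, (∫ u in (0:ℝ)..s, p0 u) * p1 s) * p2 t := by
    refine intervalIntegral.integral_congr fun t ht => ?_
    rw [Set.uIcc_of_le zero_le_one] at ht
    rw [Ga t ht, g1 t ht]
  have J2 : (∫ t in (1:ℝ)..2, (∫ s in (0:ℝ)..t, (∫ u in (0:ℝ)..s, h0 u) * h1 s) * h2 t)
      = (∫ s in (0:ℝ)..1, p0 s)
          * (∫ x in (0:ℝ)..1, (∫ u in (0:ℝ)..x, c1 u) * c2 x)
        + ∫ x in (0:ℝ)..1, (∫ s in (0:ℝ)..x, (∫ u in (0:ℝ)..s, c0 u) * c1 s) * c2 x := by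
    have step1 : (∫ t in (1:ℝ)..2, (∫ s in (0:ℝ)..t, (∫ u in (0:ℝ)..s, h0 u) * h1 s) * h2 t)
        = ∫ t in (1:ℝ)..2,
            ((∫ s in (0:ℝ)..1, (∫ u in (0:ℝ)..s, p0 u) * p1 s)
              + (∫ s in (0:ℝ)..1, p0 s) * (∫ u in (0:ℝ)..(t-1), c1 u)
              + ∫ s in (0:ℝ)..(t-1), (∫ u in (0:ℝ)..s, c0 u) * c1 s) * c2 (t-1) := by
      refine myCongrIoc one_le_two fun t ht => ?_
      rw [Gb t (Set.Ioc_subset_Icc_self ht), g2 t ht]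
    have step2 := intervalIntegral.integral_comp_sub_right (a := (1:ℝ)) (b := 2)
      (fun x => ((∫ s in (0:ℝ)..1, (∫ u in (0:ℝ)..s, p0 u) * p1 s)
        + (∫ s in (0:ℝ)..1, p0 s) * (∫ u in (0:ℝ)..x, c1 u)
        + ∫ s in (0:ℝ)..x, (∫ u in (0:ℝ)..s, c0 u) * c1 s) * c2 x) 1
    norm_num at step2
    rw [step1, step2]
    have step3 : (∫ x in (0:ℝ)..1,
          ((∫ s in (0:ℝ)..1, (∫ u in (0:ℝ)..s, p0 u) * p1 s)
            + (∫ s in (0:ℝ)..1, p0 s) * (∫ u in (0:ℝ)..x, c1 u)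
            + ∫ s in (0:ℝ)..x, (∫ u in (0:ℝ)..s, c0 u) * c1 s) * c2 x)
        = ∫ x in (0:ℝ)..1,
            ((∫ s in (0:ℝ)..1, (∫ u in (0:ℝ)..s, p0 u) * p1 s) * c2 x
              + ((∫ s in (0:ℝ)..1, p0 s) * ((∫ u in (0:ℝ)..x, c1 u) * c2 x)
                + (∫ s in (0:ℝ)..x, (∫ u in (0:ℝ)..s, c0 u) * c1 s) * c2 x)) :=
      intervalIntegral.integral_congr fun x _ => by ring
    rw [step3, intervalIntegral.integral_add ((myIISub cc2 i01 i11).const_mul _)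
        ((((myIISub (q := fun x => (∫ u in (0:ℝ)..x, c1 u) * c2 x) (contC1.mul cc2) i01 i11)).const_mul _).add
          (myIISub (q := fun x => (∫ s in (0:ℝ)..x, (∫ u in (0:ℝ)..s, c0 u) * c1 s) * c2 x) (contD.mul cc2) i01 i11)),
      intervalIntegral.integral_add ((myIISub (q := fun x => (∫ u in (0:ℝ)..x, c1 u) * c2 x) (contC1.mul cc2) i01 i11).const_mul _)
        (myIISub (q := fun x => (∫ s in (0:ℝ)..x, (∫ u in (0:ℝ)..s, c0 u) * c1 s) * c2 x) (contD.mul cc2) i01 i11),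
      intervalIntegral.integral_const_mul, intervalIntegral.integral_const_mul, z2]
    ring
  have J3 : (∫ t in (2:ℝ)..3, (∫ s in (0:ℝ)..t, (∫ u in (0:ℝ)..s, h0 u) * h1 s) * h2 t)
      = -(∫ t in (0:ℝ)..1, (∫ s in (0:ℝ)..t, (∫ u in (0:ℝ)..s, p0 u) * p1 s) * p2 t)
        - (∫ s in (0:ℝ)..1, (∫ u in (0:ℝ)..s, c0 u) * c1 s)
            * (∫ t in (0:ℝ)..1, p2 t) := by
    have step1 : (∫ t in (2:ℝ)..3, (∫ s in (0:ℝ)..t, (∫ u in (0:ℝ)..s, h0 u) * h1 s) * h2 t)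
        = ∫ t in (2:ℝ)..3,
            ((∫ s in (0:ℝ)..(3-t), (∫ u in (0:ℝ)..s, p0 u) * p1 s)
              + ∫ s in (0:ℝ)..1, (∫ u in (0:ℝ)..s, c0 u) * c1 s) * (-p2 (3-t)) := by
      refine myCongrIoc (by norm_num) fun t ht => ?_
      rw [Gc t (Set.Ioc_subset_Icc_self ht), g3 t ht]
    have step2 := intervalIntegral.integral_comp_sub_left (a := (2:ℝ)) (b := 3)
      (fun x => ((∫ s in (0:ℝ)..x, (∫ u in (0:ℝ)..s, p0 u) * p1 s)
        + ∫ s in (0:ℝ)..1, (∫ u in (0:ℝ)..s, c0 u) * c1 s) * (-p2 x)) 3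
    norm_num at step2
    rw [step1]
    simp only [mul_neg, intervalIntegral.integral_neg] at step2 ⊢
    rw [step2]
    have step3 : (∫ x in (0:ℝ)..1,
          ((∫ s in (0:ℝ)..x, (∫ u in (0:ℝ)..s, p0 u) * p1 s)
            + ∫ s in (0:ℝ)..1, (∫ u in (0:ℝ)..s, c0 u) * c1 s) * p2 x)
        = ∫ x in (0:ℝ)..1,
            ((∫ s in (0:ℝ)..x, (∫ u in (0:ℝ)..s, p0 u) * p1 s) * p2 x
              + (∫ s in (0:ℝ)..1, (∫ u in (0:ℝ)..s, c0 u) * c1 s) * p2 x) :=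
      intervalIntegral.integral_congr fun x _ => by ring
    rw [step3, intervalIntegral.integral_add (myIISub (q := fun x => (∫ s in (0:ℝ)..x, (∫ u in (0:ℝ)..s, p0 u) * p1 s) * p2 x) (contA.mul cp2) i01 i11)
        ((myIISub cp2 i01 i11).const_mul _), intervalIntegral.integral_const_mul]
    ring
  rw [L1, splitL, J1, J2, J3, R1, R2, R3]
  ring



/-- Lemma 2.25: for the conjugated loop `π·[μ,τ]·π⁻¹`, the triple iterated
integral equals `∫_{[μ,τ]} ω₁∘ω₂∘ω₃ + ∫_π ω₁ ∫_{[μ,τ]} ω₂∘ω₃ +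
∫_{[μ,τ]} ω₁∘ω₂ ∫_{π⁻¹} ω₃`.  Here `p k` is the pullback of `ωₖ` along the
path `π`, `c k` the pullback along the commutator loop `[μ,τ]` (so that
`∫_0^1 c k = 0`), and `h k` the pullback along `π·[μ,τ]·π⁻¹`, given piecewise
on `[0,3]`. -/
theorem triple_iterated_integral_over_conjugated_loop
    (p c h : Fin 3 → ℝ → ℂ)
    (hp : ∀ k, ContinuousOn (p k) (Set.Icc 0 1))
    (hc : ∀ k, ContinuousOn (c k) (Set.Icc 0 1))
    (hc0 : ∀ k, (∫ t in (0:ℝ)..1, c k t) = 0)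
    (h1 : ∀ k, ∀ t ∈ Set.Icc (0:ℝ) 1, h k t = p k t)
    (h2 : ∀ k, ∀ t ∈ Set.Ioc (1:ℝ) 2, h k t = c k (t - 1))
    (h3 : ∀ k, ∀ t ∈ Set.Ioc (2:ℝ) 3, h k t = -p k (3 - t)) :
    (∫ t₃ in (0:ℝ)..3, ∫ t₂ in (0:ℝ)..t₃, ∫ t₁ in (0:ℝ)..t₂, h 0 t₁ * h 1 t₂ * h 2 t₃)
      = (∫ t₃ in (0:ℝ)..1, ∫ t₂ in (0:ℝ)..t₃, ∫ t₁ in (0:ℝ)..t₂, c 0 t₁ * c 1 t₂ * c 2 t₃)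
        + (∫ t in (0:ℝ)..1, p 0 t) * (∫ t in (0:ℝ)..1, ∫ s in (0:ℝ)..t, c 1 s * c 2 t)
        - (∫ t in (0:ℝ)..1, ∫ s in (0:ℝ)..t, c 0 s * c 1 t) * (∫ t in (0:ℝ)..1, p 2 t) :=
  conj_key (p 0) (p 1) (p 2) (c 0) (c 1) (c 2) (h 0) (h 1) (h 2)
    (hp 0) (hp 1) (hp 2) (hc 0) (hc 1) (hc 2) (hc0 0) (hc0 1) (hc0 2)
    (h1 0) (h2 0) (h3 0) (h1 1) (h2 1) (h3 1) (h1 2) (h2 2) (h3 2)
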